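/- Let m ≥ 1, 0 < ε' ≤ 1/8, l ≥ 1, and μ = ⌈((1+ε')/(1+2ε'))·m⌉. Suppose n₁, …, n_{2l−1} are nonnegative integers with ⌈(∑_{i=1}^{l} n_i)/2⌉ + ∑_{i=l+1}^{2l−1} n_i ≤ m, and m ≥ 2l/(ε')². Set m₀ = ⌊(m−μ)/(2l−1)⌋, u_i = ⌊n_i/(2m₀)⌋ for 1 ≤ i ≤ l, and u_i = ⌊n_i/m₀⌋ for l+1 ≤ i ≤ 2l−1. Then each u_i ≤ ⌈2(2+1/ε')(2l−1)⌉, and if μ' := ∑_i u_i·m₀ < μ, then ⌈(∑_{i=1}^{l} n_i − 2∑_{i=1}^{l} u_i m₀)/2⌉ + ∑_{i=l+1}^{2l−1}(n_i − u_i m₀) ≤ m − μ. -/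

import Mathlib

private lemma aux_mod_lt (a b : ℕ) (hb : 0 < b) : a - a / b * b < b := by
  have h : a = a % b + a / b * b := by
    rw [add_comm, mul_comm]; exact (Nat.div_add_mod a b).symm
  rw [Nat.sub_eq_of_eq_add h]
  exact Nat.mod_lt a hb

private lemma aux_lt2 (a b : ℕ) (hb : 0 < b) : a < 2 * (a / (2 * b) * b) + 2 * b := by
  have h := Nat.div_add_mod a (2 * b)
  have h2 := Nat.mod_lt a (show 0 < 2 * b by omega)
  have e : 2 * b * (a / (2 * b)) = 2 * (a / (2 * b) * b) := by ring
  linarith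

private lemma final_lemma (l P Q S1 U1 T R : ℕ) (hl : 1 ≤ l)
    (h1 : S1 + l ≤ 2 * U1 + 2 * P) (h2 : T + (l - 1) ≤ Q) (h3 : P + Q ≤ R) :
    (S1 - 2 * U1 + 1) / 2 + T ≤ R := by omega

set_option maxHeartbeats 1000000 in
theorem stmt11 (ε' : ℝ) (h1 : 0 < ε') (h2 : ε' ≤ 1 / 8)
    (m l : ℕ) (hm1 : 1 ≤ m) (hl : 1 ≤ l)
    (hm : 2 * (l : ℝ) / ε' ^ 2 ≤ (m : ℝ))
    (μ : ℕ) (hμ : μ = ⌈((1 + ε') / (1 + 2 * ε')) * (m : ℝ)⌉₊)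
    (n : ℕ → ℕ)
    (hjobs : ((∑ i ∈ Finset.Icc 1 l, n i) + 1) / 2
      + ∑ i ∈ Finset.Icc (l + 1) (2 * l - 1), n i ≤ m)
    (m₀ : ℕ) (hm₀ : m₀ = (m - μ) / (2 * l - 1))
    (u : ℕ → ℕ)
    (hu1 : ∀ i ∈ Finset.Icc 1 l, u i = n i / (2 * m₀))
    (hu2 : ∀ i ∈ Finset.Icc (l + 1) (2 * l - 1), u i = n i / m₀) :
    (∀ i ∈ Finset.Icc 1 (2 * l - 1), u i ≤ ⌈2 * (2 + 1 / ε') * (2 * (l : ℝ) - 1)⌉₊) ∧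
    (∑ i ∈ Finset.Icc 1 (2 * l - 1), u i * m₀ < μ →
      ((∑ i ∈ Finset.Icc 1 l, n i - 2 * ∑ i ∈ Finset.Icc 1 l, u i * m₀) + 1) / 2
        + ∑ i ∈ Finset.Icc (l + 1) (2 * l - 1), (n i - u i * m₀) ≤ m - μ) := by
  set κ := ⌈2 * (2 + 1 / ε') * (2 * (l : ℝ) - 1)⌉₊ with hκdef
  clear_value κ
  have hcpos : 0 < 2 * l - 1 := by omega
  -- ℕ facts about m₀
  have hAge : (2 * l - 1) * m₀ ≤ m - μ := by
    rw [hm₀, mul_comm]; exact Nat.div_mul_le_self _ _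
  have hAlt : m - μ < (2 * l - 1) * m₀ + (2 * l - 1) := by
    rw [hm₀]
    have h := Nat.div_add_mod (m - μ) (2 * l - 1)
    have h2 := Nat.mod_lt (m - μ) hcpos
    linarith
  -- real analysis: m ≤ κ * m₀
  have hl1 : (1 : ℝ) ≤ (l : ℝ) := by exact_mod_cast hl
  have h12e : (0 : ℝ) < 1 + 2 * ε' := by linarith
  have hinv : (0 : ℝ) < 1 / ε' := by positivity
  have hcastc : ((2 * l - 1 : ℕ) : ℝ) = 2 * (l : ℝ) - 1 := by
    have h : (2 * l - 1 : ℕ) + 1 = 2 * l := by omega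
    have h' := congrArg (fun k : ℕ => (k : ℝ)) h
    push_cast at h'
    linarith
  have hκge : 2 * (2 + 1 / ε') * (2 * (l : ℝ) - 1) ≤ (κ : ℝ) := by
    rw [hκdef]; exact Nat.le_ceil _
  have hμlt : (μ : ℝ) < (1 + ε') / (1 + 2 * ε') * m + 1 := by
    rw [hμ]
    exact Nat.ceil_lt_add_one
      (mul_nonneg (div_nonneg (by linarith) (by linarith)) (Nat.cast_nonneg m))
  have hsub : (m : ℝ) - (μ : ℝ) ≤ ((m - μ : ℕ) : ℝ) := by
    rcases le_total μ m with h | h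
    · rw [Nat.cast_sub h]
    · have h1' : (m : ℝ) ≤ (μ : ℝ) := Nat.cast_le.mpr h
      rw [Nat.sub_eq_zero_of_le h]
      push_cast
      linarith
  have hAlt' : ((m - μ : ℕ) : ℝ) < (2 * (l : ℝ) - 1) * (m₀ : ℝ) + (2 * (l : ℝ) - 1) := by
    have h := (Nat.cast_lt (α := ℝ)).mpr hAlt
    rw [Nat.cast_add, Nat.cast_mul, hcastc] at h
    exact h
  have hμ2 : (1 + 2 * ε') * (μ : ℝ) < (1 + ε') * m + (1 + 2 * ε') := by
    have heq : (1 + 2 * ε') * ((1 + ε') / (1 + 2 * ε') * m + 1)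
        = (1 + ε') * m + (1 + 2 * ε') := by
      field_simp
    have := mul_lt_mul_of_pos_left hμlt h12e
    linarith
  have hm2 : 2 * (l : ℝ) ≤ (m : ℝ) * ε' ^ 2 := by
    rw [div_le_iff₀ (by positivity)] at hm
    linarith
  have hme : 16 * (l : ℝ) ≤ (m : ℝ) * ε' := by
    nlinarith [mul_nonneg (mul_nonneg (Nat.cast_nonneg m : (0:ℝ) ≤ m) h1.le)
      (by linarith : (0:ℝ) ≤ 1 - 8 * ε'), hm2]
  have hel : ε' * (l : ℝ) ≤ (1 / 8) * l := mul_le_mul_of_nonneg_right h2 (by positivity)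
  have hexp : (2 * (2 + 1 / ε') * ((m : ℝ) - μ - (2 * (l : ℝ) - 1))) * ε'
      = (4 * ε' + 2) * ((m : ℝ) - μ - 2 * l + 1) := by
    field_simp
    ring
  have key : (m : ℝ) * ε' ≤ (2 * (2 + 1 / ε') * ((m : ℝ) - μ - (2 * (l : ℝ) - 1))) * ε' := by
    rw [hexp]
    linarith [hμ2, hme, hel, hl1]
  have hs3 : (m : ℝ) ≤ 2 * (2 + 1 / ε') * ((m : ℝ) - μ - (2 * (l : ℝ) - 1)) :=
    le_of_mul_le_mul_right key h1
  have hM0 : (0 : ℝ) ≤ (m₀ : ℝ) := Nat.cast_nonneg _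
  have s1 : 2 * (2 + 1 / ε') * (2 * (l : ℝ) - 1) * (m₀ : ℝ) ≤ (κ : ℝ) * m₀ :=
    mul_le_mul_of_nonneg_right hκge hM0
  have hCM : (m : ℝ) - μ - (2 * (l : ℝ) - 1) < (2 * (l : ℝ) - 1) * m₀ := by linarith
  have s2 : 2 * (2 + 1 / ε') * ((m : ℝ) - μ - (2 * (l : ℝ) - 1))
      < 2 * (2 + 1 / ε') * ((2 * (l : ℝ) - 1) * m₀) :=
    mul_lt_mul_of_pos_left hCM (by linarith)
  have e1 : 2 * (2 + 1 / ε') * ((2 * (l : ℝ) - 1) * (m₀ : ℝ))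
      = 2 * (2 + 1 / ε') * (2 * (l : ℝ) - 1) * m₀ := by ring
  have hreal : (m : ℝ) ≤ (κ : ℝ) * m₀ := by linarith only [s1, s2, hs3, e1]
  have hκm : m ≤ κ * m₀ := by exact_mod_cast hreal
  have hm₀pos : 0 < m₀ := by
    rcases Nat.eq_zero_or_pos m₀ with h | h
    · rw [h, mul_zero] at hκm; omega
    · exact h
  constructor
  · -- each u i is at most κ
    intro i hi
    simp only [Finset.mem_Icc] at hi
    by_cases hile : i ≤ l
    · rw [hu1 i (Finset.mem_Icc.mpr ⟨hi.1, hile⟩)]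
      have hni : n i ≤ 2 * m := by
        have h1' : n i ≤ ∑ j ∈ Finset.Icc 1 l, n j :=
          Finset.single_le_sum (fun j _ => Nat.zero_le _) (Finset.mem_Icc.mpr ⟨hi.1, hile⟩)
        omega
      have hle : n i ≤ κ * (2 * m₀) := by
        calc n i ≤ 2 * m := hni
          _ ≤ 2 * (κ * m₀) := Nat.mul_le_mul_left 2 hκm
          _ = κ * (2 * m₀) := by ring
      calc n i / (2 * m₀) ≤ κ * (2 * m₀) / (2 * m₀) := Nat.div_le_div_right hle
        _ = κ := Nat.mul_div_cancel _ (by omega)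
    · have hli : l + 1 ≤ i := by omega
      rw [hu2 i (Finset.mem_Icc.mpr ⟨hli, hi.2⟩)]
      have hni : n i ≤ m := by
        have h1' : n i ≤ ∑ j ∈ Finset.Icc (l + 1) (2 * l - 1), n j :=
          Finset.single_le_sum (fun j _ => Nat.zero_le _) (Finset.mem_Icc.mpr ⟨hli, hi.2⟩)
        omega
      calc n i / m₀ ≤ κ * m₀ / m₀ := Nat.div_le_div_right (le_trans hni hκm)
        _ = κ := Nat.mul_div_cancel _ hm₀pos
  · -- the leftover jobs fit
    intro _
    have hcard1 : (Finset.Icc 1 l).card = l := by rw [Nat.card_Icc]; omega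
    have hcard2 : (Finset.Icc (l + 1) (2 * l - 1)).card = l - 1 := by rw [Nat.card_Icc]; omega
    have hsum1 : (∑ i ∈ Finset.Icc 1 l, n i) + l
        ≤ 2 * (∑ i ∈ Finset.Icc 1 l, u i * m₀) + 2 * (l * m₀) := by
      have hp : ∀ i ∈ Finset.Icc 1 l, n i + 1 ≤ 2 * (u i * m₀) + 2 * m₀ := by
        intro i hi
        rw [hu1 i hi]
        exact aux_lt2 (n i) m₀ hm₀pos
      calc (∑ i ∈ Finset.Icc 1 l, n i) + l = ∑ i ∈ Finset.Icc 1 l, (n i + 1) := by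
            rw [Finset.sum_add_distrib, Finset.sum_const, hcard1, smul_eq_mul, mul_one]
        _ ≤ ∑ i ∈ Finset.Icc 1 l, (2 * (u i * m₀) + 2 * m₀) := Finset.sum_le_sum hp
        _ = 2 * (∑ i ∈ Finset.Icc 1 l, u i * m₀) + 2 * (l * m₀) := by
            rw [Finset.sum_add_distrib, Finset.sum_const, hcard1, ← Finset.mul_sum,
              smul_eq_mul]
            ring
    have hsum2 : (∑ i ∈ Finset.Icc (l + 1) (2 * l - 1), (n i - u i * m₀)) + (l - 1)
        ≤ (l - 1) * m₀ := by
      have hp : ∀ i ∈ Finset.Icc (l + 1) (2 * l - 1), (n i - u i * m₀) + 1 ≤ m₀ := by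
        intro i hi
        rw [hu2 i hi]
        exact aux_mod_lt (n i) m₀ hm₀pos
      calc (∑ i ∈ Finset.Icc (l + 1) (2 * l - 1), (n i - u i * m₀)) + (l - 1)
          = ∑ i ∈ Finset.Icc (l + 1) (2 * l - 1), ((n i - u i * m₀) + 1) := by
            rw [Finset.sum_add_distrib, Finset.sum_const, hcard2, smul_eq_mul, mul_one]
        _ ≤ ∑ _i ∈ Finset.Icc (l + 1) (2 * l - 1), m₀ := Finset.sum_le_sum hp
        _ = (l - 1) * m₀ := by rw [Finset.sum_const, hcard2, smul_eq_mul]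
    have hR : l * m₀ + (l - 1) * m₀ ≤ m - μ := by
      have heq : l * m₀ + (l - 1) * m₀ = (l + (l - 1)) * m₀ := (add_mul _ _ _).symm
      rw [heq, (show l + (l - 1) = 2 * l - 1 by omega)]
      exact hAge
    exact final_lemma l (l * m₀) ((l - 1) * m₀) _ _ _ (m - μ) hl hsum1 hsum2 hR
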